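/- Let R be a finite commutative ring, L a sublattice of the lattice of R-submodules of R^n (with sum as join and intersection as meet), ‖·‖ : L → A a strictly increasing modular function with ‖0‖=0, and C ⊆ R^n a submodule. Then ρ_C(M) = ‖M‖ − ‖M ∩ C‖ is bounded increasing and submodular, i.e., (ρ_C, ‖·‖, L) is an A-latroid. -/

import Mathlib

/-- For a sublattice `S` of the lattice of submodules of `R^n` (join is sum, meet is
intersection), a strictly increasing modular function `nrm` with `nrm ⊥ = 0`, and a
code `C ⊆ R^n`, the function `ρ_C(M) = nrm M - nrm (M ⊓ C)` is bounded increasing and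
submodular, i.e. `(ρ_C, nrm, S)` is an `A`-latroid. -/
theorem code_latroid
    {A : Type*} [AddCommGroup A] [PartialOrder A] [IsOrderedAddMonoid A]
    {R : Type*} [CommRing R] [Fintype R] (n : ℕ)
    (S : Set (Submodule R (Fin n → R)))
    (hS_sup : ∀ M1 ∈ S, ∀ M2 ∈ S, M1 ⊔ M2 ∈ S)
    (hS_inf : ∀ M1 ∈ S, ∀ M2 ∈ S, M1 ⊓ M2 ∈ S)
    (nrm : Submodule R (Fin n → R) → A) (hbot : nrm ⊥ = 0)
    (hstrict : ∀ M1 M2 : Submodule R (Fin n → R), M1 < M2 → nrm M1 < nrm M2)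
    (hmod : ∀ M1 M2 : Submodule R (Fin n → R),
      nrm M1 + nrm M2 = nrm (M1 ⊔ M2) + nrm (M1 ⊓ M2))
    (C : Submodule R (Fin n → R)) :
    (∀ M1 ∈ S, ∀ M2 ∈ S, M1 < M2 →
      0 ≤ (nrm M2 - nrm (M2 ⊓ C)) - (nrm M1 - nrm (M1 ⊓ C)) ∧
      (nrm M2 - nrm (M2 ⊓ C)) - (nrm M1 - nrm (M1 ⊓ C)) ≤ nrm M2 - nrm M1) ∧
    (∀ M1 ∈ S, ∀ M2 ∈ S,
      (nrm (M1 ⊔ M2) - nrm ((M1 ⊔ M2) ⊓ C)) + (nrm (M1 ⊓ M2) - nrm ((M1 ⊓ M2) ⊓ C))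
        ≤ (nrm M1 - nrm (M1 ⊓ C)) + (nrm M2 - nrm (M2 ⊓ C))) := by
  have hmono : ∀ M1 M2 : Submodule R (Fin n → R), M1 ≤ M2 → nrm M1 ≤ nrm M2 := by
    intro M1 M2 h
    rcases h.lt_or_eq with h' | h'
    · exact (hstrict _ _ h').le
    · exact le_of_eq (by rw [h'])
  constructor
  · intro M1 _ M2 _ hlt
    have hle : M1 ≤ M2 := hlt.le
    constructor
    · have h1 := hmod M1 (M2 ⊓ C)
      have h2 : M1 ⊓ (M2 ⊓ C) = M1 ⊓ C := by
        rw [← inf_assoc, inf_eq_left.2 hle]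
      have h3 : nrm (M1 ⊔ M2 ⊓ C) ≤ nrm M2 :=
        hmono _ _ (sup_le hle inf_le_left)
      have : nrm M1 + nrm (M2 ⊓ C) ≤ nrm M2 + nrm (M1 ⊓ C) := by
        rw [h1, h2]; exact add_le_add_left h3 _
      rw [sub_nonneg, sub_le_sub_iff]
      exact this
    · have h4 : nrm (M1 ⊓ C) ≤ nrm (M2 ⊓ C) :=
        hmono _ _ (inf_le_inf_right C hle)
      calc (nrm M2 - nrm (M2 ⊓ C)) - (nrm M1 - nrm (M1 ⊓ C))
          = (nrm M2 - nrm M1) - (nrm (M2 ⊓ C) - nrm (M1 ⊓ C)) := by abel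
        _ ≤ (nrm M2 - nrm M1) - 0 := sub_le_sub_left (sub_nonneg.2 h4) _
        _ = nrm M2 - nrm M1 := sub_zero _
  · intro M1 _ M2 _
    have hkey := hmod M1 M2
    have h1 := hmod (M1 ⊓ C) (M2 ⊓ C)
    have h2 : (M1 ⊓ C) ⊓ (M2 ⊓ C) = (M1 ⊓ M2) ⊓ C := by
      rw [inf_inf_inf_comm, inf_idem]
    have h3 : nrm ((M1 ⊓ C) ⊔ (M2 ⊓ C)) ≤ nrm ((M1 ⊔ M2) ⊓ C) :=
      hmono _ _ (sup_le (inf_le_inf_right C le_sup_left)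
        (inf_le_inf_right C le_sup_right))
    have : nrm (M1 ⊓ C) + nrm (M2 ⊓ C) ≤ nrm ((M1 ⊔ M2) ⊓ C) + nrm ((M1 ⊓ M2) ⊓ C) := by
      rw [h1, h2]; exact add_le_add_left h3 _
    calc (nrm (M1 ⊔ M2) - nrm ((M1 ⊔ M2) ⊓ C)) + (nrm (M1 ⊓ M2) - nrm ((M1 ⊓ M2) ⊓ C))
        = (nrm (M1 ⊔ M2) + nrm (M1 ⊓ M2)) - (nrm ((M1 ⊔ M2) ⊓ C) + nrm ((M1 ⊓ M2) ⊓ C)) := by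
          abel
      _ = (nrm M1 + nrm M2) - (nrm ((M1 ⊔ M2) ⊓ C) + nrm ((M1 ⊓ M2) ⊓ C)) := by rw [← hkey]
      _ ≤ (nrm M1 + nrm M2) - (nrm (M1 ⊓ C) + nrm (M2 ⊓ C)) := sub_le_sub_left this _
      _ = (nrm M1 - nrm (M1 ⊓ C)) + (nrm M2 - nrm (M2 ⊓ C)) := by abel
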